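/- Let 0 < F < Q and suppose U_{n−1} ≤ Q and U_n ≤ Q. Then U_{n+1} = max{U_n, F+Q+U_{n−1}−max(U_n,Q)} − max{U_n, F+U_{n−1}−max(U_n,Q)} satisfies: U_{n+1} = 0 if F + U_{n−1} − U_n ≤ 0; U_{n+1} = F + U_{n−1} − U_n if −F < U_{n−1} − U_n < Q − F; and U_{n+1} = Q if F − Q + U_{n−1} − U_n ≥ 0. In particular U_{n+1} ≤ Q. -/
import Mathlib


theorem piecewise_caseII (F Q u v : ℝ) (h1 : 0 < F) (h2 : F < Q)
    (hu : u ≤ Q) (hv : v ≤ Q) :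
    (F + u - v ≤ 0 → max v (F + Q + u - max v Q) - max v (F + u - max v Q) = 0) ∧
    (-F < u - v → u - v < Q - F →
      max v (F + Q + u - max v Q) - max v (F + u - max v Q) = F + u - v) ∧
    (0 ≤ F - Q + u - v → max v (F + Q + u - max v Q) - max v (F + u - max v Q) = Q) ∧
    max v (F + Q + u - max v Q) - max v (F + u - max v Q) ≤ Q := by
  rw [max_eq_right hv]
  refine ⟨fun h => ?_, fun h h' => ?_, fun h => ?_, ?_⟩ <;>
    rcases le_total v (F + Q + u - Q) with hA | hA <;>
    rcases le_total v (F + u - Q) with hB | hB <;>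
    simp [max_eq_left, max_eq_right, hA, hB] <;> linarith
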